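/- For every positive integer n, the series \sum_{p=n}^{\infty} \varepsilon_p converges and its sum equals r_n; that is, the family (\varepsilon_p)_{p \ge n} has sum r_n. -/
import Mathlib


/-- Error term in Stirling's formula: `n! = √(2π) n^(n+1/2) e^(-n) e^(r_n)`. -/
noncomputable def stirlingErr (n : ℕ) : ℝ :=
  Real.log (n.factorial) - ((n : ℝ) + 1/2) * Real.log n + n - Real.log (Real.sqrt (2 * Real.pi))

/-- Robbins' summand: `ε_p = (p + 1/2) log((p+1)/p) - 1`. -/
noncomputable def eps (p : ℕ) : ℝ :=
  ((p : ℝ) + 1/2) * Real.log (((p : ℝ) + 1) / p) - 1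

open Real Filter Stirling Finset

lemma stirlingErr_eq (n : ℕ) (hn : 0 < n) :
    stirlingErr n = Real.log (Stirling.stirlingSeq n) - Real.log (Real.sqrt π) := by
  have hn' : (0 : ℝ) < n := by exact_mod_cast hn
  rw [stirlingErr, Stirling.log_stirlingSeq_formula, Real.log_div hn'.ne' (Real.exp_pos 1).ne',
    Real.log_exp, Real.log_mul two_ne_zero hn'.ne',
    Real.sqrt_eq_rpow, Real.sqrt_eq_rpow, Real.log_rpow (by positivity), Real.log_rpow Real.pi_pos,
    Real.log_mul two_ne_zero Real.pi_pos.ne']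
  ring

lemma eps_eq (p : ℕ) (hp : 0 < p) : eps p = stirlingErr p - stirlingErr (p + 1) := by
  have hp' : (0 : ℝ) < p := by exact_mod_cast hp
  have h1 : (0 : ℝ) < (p : ℝ) + 1 := by positivity
  rw [eps, stirlingErr, stirlingErr, Nat.factorial_succ, Nat.cast_mul,
    Real.log_mul (by positivity) (by exact_mod_cast Nat.cast_pos.mpr p.factorial_pos |>.ne'),
    Real.log_div h1.ne' hp'.ne']
  push_cast
  ring

lemma eps_nonneg (p : ℕ) (hp : 0 < p) : 0 ≤ eps p := by
  obtain ⟨m, rfl⟩ := Nat.exists_eq_add_of_lt hp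
  rw [eps_eq _ hp, sub_nonneg, stirlingErr_eq _ hp, stirlingErr_eq _ (Nat.succ_pos _)]
  have := Stirling.log_stirlingSeq'_antitone (Nat.le_succ m)
  simp only [Function.comp, Nat.succ_eq_add_one] at this
  have hm : 0 + m + 1 = m + 1 := by omega
  rw [hm]
  exact sub_le_sub_right this _

lemma stirlingErr_tendsto : Tendsto stirlingErr atTop (nhds 0) := by
  have h1 : Tendsto (fun n : ℕ => Real.log (Stirling.stirlingSeq n) - Real.log (Real.sqrt π))
      atTop (nhds 0) := by
    have hlog : Tendsto (fun n : ℕ => Real.log (Stirling.stirlingSeq n)) atTop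
        (nhds (Real.log (Real.sqrt π))) :=
      (Real.continuousAt_log (by positivity)).tendsto.comp Stirling.tendsto_stirlingSeq_sqrt_pi
    simpa using hlog.sub_const (Real.log (Real.sqrt π))
  refine h1.congr' ?_
  filter_upwards [eventually_ge_atTop 1] with n hn
  exact (stirlingErr_eq n hn).symm

/-- For every positive integer `n`, the family `(ε_p)_{p ≥ n}` has sum `r_n`. -/
theorem hasSum_eps_stirlingErr (n : ℕ) (hn : 0 < n) :
    HasSum (fun p : {p : ℕ // n ≤ p} => eps p) (stirlingErr n) := by
  let e : ℕ ≃ {p : ℕ // n ≤ p} :=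
    { toFun := fun k => ⟨n + k, Nat.le_add_right n k⟩
      invFun := fun p => p.1 - n
      left_inv := fun k => by simp
      right_inv := fun p => by ext; have := p.2; simp; omega }
  have key : HasSum (fun k : ℕ => eps (n + k)) (stirlingErr n) := by
    rw [hasSum_iff_tendsto_nat_of_nonneg (fun k => eps_nonneg _ (by omega))]
    have hsum : ∀ N : ℕ, ∑ k ∈ range N, eps (n + k) = stirlingErr n - stirlingErr (n + N) := by
      intro N
      have : ∀ k ∈ range N, eps (n + k) =
          (fun i => stirlingErr (n + i)) k - (fun i => stirlingErr (n + i)) (k + 1) := by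
        intro k _
        rw [eps_eq _ (by omega)]
        simp only []; rw [Nat.add_assoc]
      rw [Finset.sum_congr rfl this, Finset.sum_range_sub' (fun i => stirlingErr (n + i)) N]
      simp
    simp only [hsum]
    have : Tendsto (fun N : ℕ => stirlingErr (n + N)) atTop (nhds 0) :=
      stirlingErr_tendsto.comp ((tendsto_add_atTop_nat n).congr fun a => Nat.add_comm a n)
    simpa using tendsto_const_nhds.sub this
  exact e.hasSum_iff.mp key
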